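/- arXiv:1711.04751 — 3 statements merged into one kernel-verified Lean document; each statement's English description precedes it below -/
import Mathlib

section
/- For a fixed nonnegative integer k and any θ ∈ [0, π/2], the sum ∑_{j=0}^{k} C(k,j)² Γ(k−j+1) Γ(j+3/2) cos^{2j}θ sin^{2k−2j}θ ≤ Γ(k+3/2), with equality when θ = 0. -/
lemma gamma_fact_aux (j : ℕ) : ∀ d : ℕ,
    ((d + j).factorial : ℝ) * Real.Gamma ((j : ℝ) + 3/2) ≤
      (j.factorial : ℝ) * Real.Gamma ((d : ℝ) + (j : ℝ) + 3/2) := by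
  intro d
  induction d with
  | zero => simp
  | succ d ih =>
    have hGpos : 0 < Real.Gamma ((d : ℝ) + (j : ℝ) + 3/2) :=
      Real.Gamma_pos_of_pos (by positivity)
    have hG : Real.Gamma (((d+1 : ℕ) : ℝ) + (j : ℝ) + 3/2)
        = ((d : ℝ) + j + 3/2) * Real.Gamma ((d : ℝ) + (j : ℝ) + 3/2) := by
      have h1 : ((d+1 : ℕ) : ℝ) + (j : ℝ) + 3/2 = ((d : ℝ) + j + 3/2) + 1 := by
        push_cast; ring
      rw [h1, Real.Gamma_add_one (by positivity)]
    have hfac : ((d + 1 + j).factorial : ℝ)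
        = ((d : ℝ) + j + 1) * ((d + j).factorial : ℝ) := by
      have : d + 1 + j = (d + j) + 1 := by ring
      rw [this, Nat.factorial_succ]; push_cast; ring
    calc ((d + 1 + j).factorial : ℝ) * Real.Gamma ((j : ℝ) + 3/2)
        = ((d : ℝ) + j + 1) * (((d + j).factorial : ℝ) * Real.Gamma ((j : ℝ) + 3/2)) := by
          rw [hfac]; ring
      _ ≤ ((d : ℝ) + j + 1) * ((j.factorial : ℝ) * Real.Gamma ((d : ℝ) + (j : ℝ) + 3/2)) := by
          apply mul_le_mul_of_nonneg_left ih (by positivity)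
      _ ≤ ((d : ℝ) + j + 3/2) * ((j.factorial : ℝ) * Real.Gamma ((d : ℝ) + (j : ℝ) + 3/2)) := by
          apply mul_le_mul_of_nonneg_right (by linarith) (by positivity)
      _ = (j.factorial : ℝ) * Real.Gamma (((d+1 : ℕ) : ℝ) + (j : ℝ) + 3/2) := by
          rw [hG]; ring

lemma key (k j : ℕ) (hj : j ≤ k) :
    (k.choose j : ℝ) * Real.Gamma ((k : ℝ) - (j : ℝ) + 1) * Real.Gamma ((j : ℝ) + 3/2)
      ≤ Real.Gamma ((k : ℝ) + 3/2) := by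
  have hcast : (k : ℝ) - (j : ℝ) + 1 = ((k - j : ℕ) : ℝ) + 1 := by
    push_cast [hj]; ring
  rw [hcast, Real.Gamma_nat_eq_factorial]
  have haux := gamma_fact_aux j (k - j)
  have hkj : k - j + j = k := Nat.sub_add_cancel hj
  rw [hkj] at haux
  have hkcast : ((k - j : ℕ) : ℝ) + (j : ℝ) = (k : ℝ) := by push_cast [hj]; ring
  rw [hkcast] at haux
  have hchoose : (k.choose j : ℝ) * ((k - j).factorial : ℝ) * (j.factorial : ℝ)
      = (k.factorial : ℝ) := by
    have := Nat.choose_mul_factorial_mul_factorial hj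
    have h2 : k.choose j * (k - j).factorial * j.factorial = k.factorial := by
      rw [mul_right_comm]; exact this
    exact_mod_cast congrArg (Nat.cast : ℕ → ℝ) h2
  have hjpos : (0:ℝ) < (j.factorial : ℝ) := by exact_mod_cast j.factorial_pos
  rw [← mul_le_mul_iff_of_pos_right hjpos]
  calc (k.choose j : ℝ) * ((k - j).factorial : ℝ) * Real.Gamma ((j : ℝ) + 3/2) * (j.factorial : ℝ)
      = (k.factorial : ℝ) * Real.Gamma ((j : ℝ) + 3/2) := by rw [← hchoose]; ring
    _ ≤ (j.factorial : ℝ) * Real.Gamma ((k : ℝ) + 3/2) := haux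
    _ = Real.Gamma ((k : ℝ) + 3/2) * (j.factorial : ℝ) := by ring

/-- For a fixed nonnegative integer `k` and any `θ ∈ [0, π/2]`,
`∑_{j=0}^{k} C(k,j)² Γ(k−j+1) Γ(j+3/2) cos^{2j}θ sin^{2k−2j}θ ≤ Γ(k+3/2)`,
with equality when `θ = 0`. -/
theorem stmt1 (k : ℕ) (θ : ℝ) (hθ : θ ∈ Set.Icc 0 (Real.pi / 2)) :
    (∑ j ∈ Finset.range (k + 1),
        (k.choose j : ℝ) ^ 2 * Real.Gamma ((k : ℝ) - (j : ℝ) + 1) *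
          Real.Gamma ((j : ℝ) + 3/2) * Real.cos θ ^ (2 * j) * Real.sin θ ^ (2 * (k - j)))
      ≤ Real.Gamma ((k : ℝ) + 3/2) ∧
    (θ = 0 →
      (∑ j ∈ Finset.range (k + 1),
          (k.choose j : ℝ) ^ 2 * Real.Gamma ((k : ℝ) - (j : ℝ) + 1) *
            Real.Gamma ((j : ℝ) + 3/2) * Real.cos θ ^ (2 * j) * Real.sin θ ^ (2 * (k - j)))
        = Real.Gamma ((k : ℝ) + 3/2)) := by
  constructor
  · calc (∑ j ∈ Finset.range (k + 1),
        (k.choose j : ℝ) ^ 2 * Real.Gamma ((k : ℝ) - (j : ℝ) + 1) *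
          Real.Gamma ((j : ℝ) + 3/2) * Real.cos θ ^ (2 * j) * Real.sin θ ^ (2 * (k - j)))
        ≤ ∑ j ∈ Finset.range (k + 1),
            Real.Gamma ((k : ℝ) + 3/2) *
              ((k.choose j : ℝ) * Real.cos θ ^ (2 * j) * Real.sin θ ^ (2 * (k - j))) := by
          apply Finset.sum_le_sum
          intro j hjmem
          have hj : j ≤ k := Nat.lt_succ_iff.mp (Finset.mem_range.mp hjmem)
          have hkey := key k j hj
          have hc : (0:ℝ) ≤ Real.cos θ ^ (2 * j) := by
            rw [pow_mul]; positivity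
          have hs : (0:ℝ) ≤ Real.sin θ ^ (2 * (k - j)) := by
            rw [pow_mul]; positivity
          have hch : (0:ℝ) ≤ (k.choose j : ℝ) := by positivity
          have h1 : (k.choose j : ℝ) ^ 2 * Real.Gamma ((k : ℝ) - (j : ℝ) + 1) *
              Real.Gamma ((j : ℝ) + 3/2)
              ≤ (k.choose j : ℝ) * Real.Gamma ((k : ℝ) + 3/2) := by
            have := mul_le_mul_of_nonneg_left hkey hch
            calc (k.choose j : ℝ) ^ 2 * Real.Gamma ((k : ℝ) - (j : ℝ) + 1) *
                Real.Gamma ((j : ℝ) + 3/2)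
                = (k.choose j : ℝ) * ((k.choose j : ℝ) * Real.Gamma ((k : ℝ) - (j : ℝ) + 1) *
                    Real.Gamma ((j : ℝ) + 3/2)) := by ring
              _ ≤ (k.choose j : ℝ) * Real.Gamma ((k : ℝ) + 3/2) := this
          calc (k.choose j : ℝ) ^ 2 * Real.Gamma ((k : ℝ) - (j : ℝ) + 1) *
              Real.Gamma ((j : ℝ) + 3/2) * Real.cos θ ^ (2 * j) * Real.sin θ ^ (2 * (k - j))
              ≤ (k.choose j : ℝ) * Real.Gamma ((k : ℝ) + 3/2) *
                  Real.cos θ ^ (2 * j) * Real.sin θ ^ (2 * (k - j)) := by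
                apply mul_le_mul_of_nonneg_right _ hs
                exact mul_le_mul_of_nonneg_right h1 hc
            _ = Real.Gamma ((k : ℝ) + 3/2) *
                  ((k.choose j : ℝ) * Real.cos θ ^ (2 * j) * Real.sin θ ^ (2 * (k - j))) := by
                ring
      _ = Real.Gamma ((k : ℝ) + 3/2) := by
          rw [← Finset.mul_sum]
          have hbin : (∑ j ∈ Finset.range (k + 1),
              (k.choose j : ℝ) * Real.cos θ ^ (2 * j) * Real.sin θ ^ (2 * (k - j))) = 1 := by
            have := add_pow (Real.cos θ ^ 2) (Real.sin θ ^ 2) k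
            rw [Real.cos_sq_add_sin_sq, one_pow] at this
            rw [this]
            apply Finset.sum_congr rfl
            intro j _
            rw [← pow_mul, ← pow_mul]
            ring
          rw [hbin, mul_one]
  · intro h0
    subst h0
    rw [Finset.sum_eq_single k]
    · simp [Nat.sub_self]
    · intro j hjmem hjne
      have hj : j ≤ k := Nat.lt_succ_iff.mp (Finset.mem_range.mp hjmem)
      have hpos : 0 < k - j := Nat.sub_pos_of_lt (lt_of_le_of_ne hj hjne)
      have : Real.sin 0 ^ (2 * (k - j)) = 0 := by
        rw [Real.sin_zero]
        exact zero_pow (by omega)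
      rw [this, mul_zero]
    · intro h; exact absurd (Finset.self_mem_range_succ k) h
end

section
/- For a fixed nonnegative integer k and reals ν₁, ν₂ with ν₁² + ν₂² = 1, ∑_{j=0}^{k} C(2k,2j) Γ(k−j+1) Γ(j+1/2) ν₁^{2k−2j} ν₂^{2j} ≤ k! · Γ(1/2). -/
lemma gamma_half_formula (j : ℕ) :
    Real.Gamma ((j : ℝ) + 1/2) * 4 ^ j * j.factorial = (2 * j).factorial * Real.Gamma (1/2) := by
  induction j with
  | zero => simp
  | succ n ih =>
      have hne : (n : ℝ) + 1/2 ≠ 0 := by positivity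
      have h1 : (((n : ℕ) + 1 : ℕ) : ℝ) + 1/2 = ((n : ℝ) + 1/2) + 1 := by push_cast; ring
      have h2 : Real.Gamma (((n : ℝ) + 1/2) + 1) = ((n : ℝ) + 1/2) * Real.Gamma ((n : ℝ) + 1/2) :=
        Real.Gamma_add_one hne
      rw [h1, h2]
      have h3 : ((2 * (n + 1)).factorial : ℝ) = (2 * n + 2) * ((2 * n + 1) * ((2 * n).factorial : ℝ)) := by
        have he : 2 * (n + 1) = (2 * n + 1) + 1 := by ring
        rw [he, Nat.factorial_succ, Nat.factorial_succ]
        push_cast; ring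
      rw [h3]
      have h4 : ((n + 1).factorial : ℝ) = ((n : ℝ) + 1) * (n.factorial : ℝ) := by
        rw [Nat.factorial_succ]; push_cast; ring
      rw [h4]
      linear_combination (4 * ((n : ℝ) + 1/2) * ((n : ℝ) + 1)) * ih

lemma centralBinom_le (m j : ℕ) :
    Nat.centralBinom (m + j) ≤ 4 ^ j * Nat.centralBinom m := by
  induction j with
  | zero => simp
  | succ n ih =>
      have step : Nat.centralBinom (m + n + 1) ≤ 4 * Nat.centralBinom (m + n) := by
        have h := Nat.succ_mul_centralBinom_succ (m + n)
        have h2 : (m + n + 1) * Nat.centralBinom (m + n + 1)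
            ≤ (m + n + 1) * (4 * Nat.centralBinom (m + n)) := by
          rw [h]; nlinarith [Nat.centralBinom_pos (m + n)]
        exact Nat.le_of_mul_le_mul_left h2 (Nat.succ_pos _)
      calc Nat.centralBinom (m + (n + 1)) = Nat.centralBinom (m + n + 1) := by rw [Nat.add_succ]
        _ ≤ 4 * Nat.centralBinom (m + n) := step
        _ ≤ 4 * (4 ^ n * Nat.centralBinom m) := Nat.mul_le_mul_left _ ih
        _ = 4 ^ (n + 1) * Nat.centralBinom m := by ring

lemma key_nat (k j : ℕ) (h : j ≤ k) :
    (2 * k).choose (2 * j) * (k - j).factorial * (2 * j).factorial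
      ≤ 4 ^ j * j.factorial * k.choose j * k.factorial := by
  set m := k - j with hm
  have hk : k = m + j := by omega
  have hc : Nat.centralBinom k ≤ 4 ^ j * Nat.centralBinom m := by
    rw [hk]; exact centralBinom_le m j
  have spec : ∀ n : ℕ, Nat.centralBinom n * n.factorial * n.factorial = (2 * n).factorial := by
    intro n
    have h1 := Nat.choose_mul_factorial_mul_factorial (show n ≤ 2 * n by omega)
    rw [show 2 * n - n = n by omega] at h1
    rw [Nat.centralBinom]; exact h1
  refine Nat.le_of_mul_le_mul_right ?_
    (show 0 < (2 * m).factorial * m.factorial from by positivity)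
  calc (2 * k).choose (2 * j) * m.factorial * (2 * j).factorial * ((2 * m).factorial * m.factorial)
      = ((2 * k).choose (2 * j) * (2 * j).factorial * (2 * k - 2 * j).factorial) *
          (m.factorial * m.factorial) := by
        have he : 2 * k - 2 * j = 2 * m := by omega
        rw [he]; ring
    _ = (2 * k).factorial * (m.factorial * m.factorial) := by
        rw [Nat.choose_mul_factorial_mul_factorial (by omega : 2 * j ≤ 2 * k)]
    _ = (Nat.centralBinom k * k.factorial * k.factorial) * (m.factorial * m.factorial) := by
        rw [spec k]
    _ ≤ ((4 ^ j * Nat.centralBinom m) * k.factorial * k.factorial) * (m.factorial * m.factorial) :=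
        Nat.mul_le_mul_right _ (Nat.mul_le_mul_right _ (Nat.mul_le_mul_right _ hc))
    _ = 4 ^ j * (Nat.centralBinom m * m.factorial * m.factorial) * k.factorial * k.factorial := by
        ring
    _ = 4 ^ j * (2 * m).factorial * k.factorial * k.factorial := by
        rw [← spec m]
    _ = 4 ^ j * (2 * m).factorial * k.factorial * (k.choose j * j.factorial * m.factorial) := by
        rw [hm, Nat.choose_mul_factorial_mul_factorial h]
    _ = 4 ^ j * j.factorial * k.choose j * k.factorial * ((2 * m).factorial * m.factorial) := by
        ring

/-- For a fixed nonnegative integer `k` and reals `ν₁, ν₂` with `ν₁² + ν₂² = 1`,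
`∑_{j=0}^{k} C(2k,2j) Γ(k−j+1) Γ(j+1/2) ν₁^{2k−2j} ν₂^{2j} ≤ k! · Γ(1/2)`. -/
theorem stmt8 (k : ℕ) (ν₁ ν₂ : ℝ) (hν : ν₁ ^ 2 + ν₂ ^ 2 = 1) :
    (∑ j ∈ Finset.range (k + 1),
        ((2 * k).choose (2 * j) : ℝ) * Real.Gamma ((k : ℝ) - (j : ℝ) + 1) *
          Real.Gamma ((j : ℝ) + 1/2) * ν₁ ^ (2 * (k - j)) * ν₂ ^ (2 * j))
      ≤ (k.factorial : ℝ) * Real.Gamma (1/2) := by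
  have hbin : (∑ j ∈ Finset.range (k + 1),
      (k.choose j : ℝ) * (ν₁ ^ 2) ^ (k - j) * (ν₂ ^ 2) ^ j) = 1 := by
    have hb := add_pow (ν₂ ^ 2) (ν₁ ^ 2) k
    rw [show ν₂ ^ 2 + ν₁ ^ 2 = 1 by linarith, one_pow] at hb
    rw [hb]
    exact Finset.sum_congr rfl fun j _ => by ring
  calc (∑ j ∈ Finset.range (k + 1),
        ((2 * k).choose (2 * j) : ℝ) * Real.Gamma ((k : ℝ) - (j : ℝ) + 1) *
          Real.Gamma ((j : ℝ) + 1/2) * ν₁ ^ (2 * (k - j)) * ν₂ ^ (2 * j))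
      ≤ ∑ j ∈ Finset.range (k + 1),
        (k.factorial : ℝ) * Real.Gamma (1/2) *
          ((k.choose j : ℝ) * (ν₁ ^ 2) ^ (k - j) * (ν₂ ^ 2) ^ j) := by
        apply Finset.sum_le_sum
        intro j hj
        have hjk : j ≤ k := by have := Finset.mem_range.mp hj; omega
        have hG1 : Real.Gamma ((k : ℝ) - (j : ℝ) + 1) = ((k - j).factorial : ℝ) := by
          have he : (k : ℝ) - (j : ℝ) + 1 = (((k - j : ℕ) : ℝ)) + 1 := by
            push_cast [hjk]; ring
          rw [he, Real.Gamma_nat_eq_factorial]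
        have hGpos : 0 < Real.Gamma (1/2) := Real.Gamma_pos_of_pos (by norm_num)
        have hnatR : ((2 * k).choose (2 * j) : ℝ) * ((k - j).factorial : ℝ) * ((2 * j).factorial : ℝ)
            ≤ 4 ^ j * (j.factorial : ℝ) * (k.choose j : ℝ) * (k.factorial : ℝ) := by
          exact_mod_cast key_nat k j hjk
        have hden : (0 : ℝ) < 4 ^ j * (j.factorial : ℝ) := by positivity
        have key : ((2 * k).choose (2 * j) : ℝ) * ((k - j).factorial : ℝ) *
            Real.Gamma ((j : ℝ) + 1/2) ≤ (k.factorial : ℝ) * Real.Gamma (1/2) * (k.choose j : ℝ) := by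
          rw [← mul_le_mul_iff_left₀ hden]
          calc ((2 * k).choose (2 * j) : ℝ) * ((k - j).factorial : ℝ) *
                Real.Gamma ((j : ℝ) + 1/2) * (4 ^ j * (j.factorial : ℝ))
              = ((2 * k).choose (2 * j) : ℝ) * ((k - j).factorial : ℝ) *
                  ((2 * j).factorial : ℝ) * Real.Gamma (1/2) := by
                linear_combination (((2 * k).choose (2 * j) : ℝ) * ((k - j).factorial : ℝ)) *
                  gamma_half_formula j
            _ ≤ 4 ^ j * (j.factorial : ℝ) * (k.choose j : ℝ) * (k.factorial : ℝ) *
                  Real.Gamma (1/2) := mul_le_mul_of_nonneg_right hnatR hGpos.le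
            _ = (k.factorial : ℝ) * Real.Gamma (1/2) * (k.choose j : ℝ) *
                  (4 ^ j * (j.factorial : ℝ)) := by ring
        have hp1 : ν₁ ^ (2 * (k - j)) = (ν₁ ^ 2) ^ (k - j) := by rw [pow_mul]
        have hp2 : ν₂ ^ (2 * j) = (ν₂ ^ 2) ^ j := by rw [pow_mul]
        rw [hG1, hp1, hp2]
        calc ((2 * k).choose (2 * j) : ℝ) * ((k - j).factorial : ℝ) *
              Real.Gamma ((j : ℝ) + 1/2) * (ν₁ ^ 2) ^ (k - j) * (ν₂ ^ 2) ^ j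
            = (((2 * k).choose (2 * j) : ℝ) * ((k - j).factorial : ℝ) *
                Real.Gamma ((j : ℝ) + 1/2)) * ((ν₁ ^ 2) ^ (k - j) * (ν₂ ^ 2) ^ j) := by ring
          _ ≤ ((k.factorial : ℝ) * Real.Gamma (1/2) * (k.choose j : ℝ)) *
                ((ν₁ ^ 2) ^ (k - j) * (ν₂ ^ 2) ^ j) :=
              mul_le_mul_of_nonneg_right key (by positivity)
          _ = (k.factorial : ℝ) * Real.Gamma (1/2) *
                ((k.choose j : ℝ) * (ν₁ ^ 2) ^ (k - j) * (ν₂ ^ 2) ^ j) := by ring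
    _ = (k.factorial : ℝ) * Real.Gamma (1/2) := by
        rw [← Finset.mul_sum, hbin, mul_one]
end

section
/- For 0 ≤ α ≤ 2n+3 (n ≥ 1 integer) and all r ∈ [0,1), (1−r²)^α ∑_{k=0}^∞ C(α+k−1,k)² [Γ(k+3/2)/Γ(k+n+α+3/2)] r^{2k} ≤ Γ(3/2)/Γ(n+α+3/2), with equality at r = 0. -/
theorem crec (α : ℝ) (h0 : 0 ≤ α) (c : ℕ → ℝ)
    (hc : ∀ k : ℕ, c k =
      if k = 0 then 1 else Real.Gamma (α + k) / (Real.Gamma α * k.factorial)) :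
    ∀ k : ℕ, ((k : ℝ) + 1) * c (k + 1) = (α + k) * c k := by
  intro k
  rcases eq_or_ne (Real.Gamma α) 0 with hg | hg
  · have h1 : c (k+1) = 0 := by rw [hc]; simp [hg]
    rcases Nat.eq_zero_or_pos k with rfl | hk
    · have hα : α = 0 := by
        by_contra h
        exact (Real.Gamma_pos_of_pos (lt_of_le_of_ne h0 (Ne.symm h))).ne' hg
      simp [h1, hα, hc 0]
    · have h2 : c k = 0 := by rw [hc, if_neg hk.ne']; simp [hg]
      simp [h1, h2]
  · have hΓ : Real.Gamma (α + ((k:ℝ) + 1)) = (α + k) * Real.Gamma (α + k) := by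
      have h' : α + ((k:ℝ) + 1) = (α + k) + 1 := by ring
      rw [h', Real.Gamma_add_one]
      rcases Nat.eq_zero_or_pos k with rfl | hk
      · intro h
        apply hg
        have : α = 0 := by simpa using h
        simp [this, Real.Gamma_zero]
      · have : (1:ℝ) ≤ (k:ℝ) := by exact_mod_cast hk
        positivity
    rw [hc (k+1), if_neg (Nat.succ_ne_zero k)]
    have hcast : ((k+1 : ℕ) : ℝ) = (k:ℝ) + 1 := by push_cast; ring
    rw [show (α + ((k+1:ℕ):ℝ)) = α + ((k:ℝ)+1) by rw [hcast], hΓ]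
    have hfac : ((k+1).factorial : ℝ) = ((k:ℝ)+1) * (k.factorial : ℝ) := by
      rw [Nat.factorial_succ]; push_cast; ring
    rw [hfac]
    rcases Nat.eq_zero_or_pos k with rfl | hk
    · rw [hc 0, if_pos rfl]
      have hα : α ≠ 0 := by
        intro h; exact hg (by simp [h, Real.Gamma_zero])
      field_simp
      simp
    · rw [hc k, if_neg hk.ne']
      have hf : (k.factorial : ℝ) ≠ 0 := by positivity
      have hk1 : ((k:ℝ) + 1) ≠ 0 := by positivity
      field_simp

-- nonnegativity
theorem cnonneg (α : ℝ) (h0 : 0 ≤ α) (c : ℕ → ℝ) (hc0 : c 0 = 1)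
    (hrec : ∀ k : ℕ, ((k : ℝ) + 1) * c (k + 1) = (α + k) * c k) :
    ∀ k, 0 ≤ c k := by
  intro k
  induction k with
  | zero => rw [hc0]; norm_num
  | succ k ih =>
    have h := hrec k
    have hk1 : (0:ℝ) < (k:ℝ) + 1 := by positivity
    nlinarith [mul_nonneg (by linarith : (0:ℝ) ≤ α + k) ih]

-- key identity for partial sums
theorem keyident (α : ℝ) (c : ℕ → ℝ)
    (hrec : ∀ k : ℕ, ((k : ℝ) + 1) * c (k + 1) = (α + k) * c k) (y : ℝ) :
    ∀ N : ℕ, α * (∑ k ∈ Finset.range (N+1), c k * y ^ k)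
      - (1 - y) * (∑ k ∈ Finset.range (N+1), c k * ((k:ℝ) * y ^ (k-1)))
      = (α + N) * c N * y ^ N := by
  intro N
  induction N with
  | zero => simp
  | succ N ih =>
    rw [Finset.sum_range_succ, Finset.sum_range_succ (f := fun k => c k * ((k:ℝ) * y ^ (k-1)))]
    have h := hrec N
    push_cast
    linear_combination ih - y^N * h

theorem psum_bound (α : ℝ) (h0 : 0 ≤ α) (c : ℕ → ℝ) (hc0 : c 0 = 1)
    (hrec : ∀ k : ℕ, ((k : ℝ) + 1) * c (k + 1) = (α + k) * c k)
    (hcn : ∀ k, 0 ≤ c k)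
    (x : ℝ) (hx0 : 0 ≤ x) (hx1 : x < 1) (N : ℕ) :
    (1 - x) ^ α * ∑ k ∈ Finset.range N, c k * x ^ k ≤ 1 := by
  rcases Nat.eq_zero_or_pos N with rfl | hN
  · simp
  obtain ⟨M, rfl⟩ := Nat.exists_eq_add_of_le hN
  rw [Nat.add_comm 1 M]
  set P : ℝ → ℝ := fun y => ∑ k ∈ Finset.range (M+1), c k * y ^ k with hP
  set D : ℝ → ℝ := fun y => ∑ k ∈ Finset.range (M+1), c k * ((k:ℝ) * y ^ (k-1)) with hD
  have hPd : ∀ y : ℝ, HasDerivAt P (D y) y := by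
    intro y
    apply HasDerivAt.fun_sum
    intro k _
    simpa using (hasDerivAt_pow k y).const_mul (c k)
  set h : ℝ → ℝ := fun y => (1 - y) ^ α * P y with hh
  have hhd : ∀ y : ℝ, y < 1 → HasDerivAt h
      (α * (1 - y) ^ (α - 1) * (-1) * P y + (1 - y) ^ α * D y) y := by
    intro y hy
    have h1 : HasDerivAt (fun z : ℝ => (1 - z) ^ α) (α * (1 - y) ^ (α - 1) * (-1)) y := by
      have := ((hasDerivAt_id y).const_sub 1).rpow_const
        (p := α) (Or.inl (by simp only [id_eq]; intro hz; linarith))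
      simpa using this
    exact h1.mul (hPd y)
  -- derivative nonpositive on (0, x) ⊂ [0,1)
  have hderiv_nonpos : ∀ y : ℝ, 0 ≤ y → y < 1 → 
      α * (1 - y) ^ (α - 1) * (-1) * P y + (1 - y) ^ α * D y ≤ 0 := by
    intro y hy0 hy1
    have hid := keyident α c hrec y M
    have h1y : (0:ℝ) < 1 - y := by linarith
    have hDP : (1 - y) * D y ≤ α * P y := by
      have hyN : 0 ≤ (α + M) * c M * y ^ M :=
        mul_nonneg (mul_nonneg (by positivity) (hcn M)) (by positivity)
      show (1 - y) * (∑ k ∈ Finset.range (M+1), c k * ((k:ℝ) * y ^ (k-1)))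
        ≤ α * (∑ k ∈ Finset.range (M+1), c k * y ^ k)
      linarith
    have hpow : (1 - y) ^ α = (1 - y) ^ (α - 1) * (1 - y) := by
      rw [← Real.rpow_add_one h1y.ne' (α - 1)]; ring_nf
    have hnn : (0:ℝ) ≤ (1 - y) ^ (α - 1) := Real.rpow_nonneg h1y.le _
    calc α * (1 - y) ^ (α - 1) * (-1) * P y + (1 - y) ^ α * D y
        = (1 - y) ^ (α - 1) * ((1 - y) * D y) - (1 - y) ^ (α - 1) * (α * P y) := by
          rw [hpow]; ring
      _ ≤ 0 := by
          have := mul_le_mul_of_nonneg_left hDP hnn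
          linarith
  have hx : h x ≤ h 0 := by
    rcases eq_or_lt_of_le hx0 with rfl | hx0'
    · exact le_refl _
    · have : AntitoneOn h (Set.Icc 0 x) := by
        apply antitoneOn_of_deriv_nonpos (convex_Icc 0 x)
        · exact fun y hy => ((hhd y (lt_of_le_of_lt hy.2 hx1)).continuousAt).continuousWithinAt
        · intro y hy
          rw [interior_Icc] at hy
          exact ((hhd y (lt_trans hy.2 hx1)).differentiableAt).differentiableWithinAt
        · intro y hy
          rw [interior_Icc] at hy
          rw [(hhd y (lt_trans hy.2 hx1)).deriv]
          exact hderiv_nonpos y hy.1.le (lt_trans hy.2 hx1)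
      exact this (Set.left_mem_Icc.2 hx0) (Set.mem_Icc.2 ⟨hx0, le_refl x⟩) hx0
  have hh0 : h 0 = 1 := by
    show (1 - (0:ℝ)) ^ α * (∑ k ∈ Finset.range (M+1), c k * (0:ℝ) ^ k) = 1
    rw [Finset.sum_eq_single 0]
    · simp [hc0]
    · intro k _ hk
      simp [zero_pow hk]
    · intro habs
      exact absurd (Finset.mem_range.2 (Nat.succ_pos M)) habs
  calc (1 - x) ^ α * ∑ k ∈ Finset.range (M+1), c k * x ^ k = h x := rfl
    _ ≤ h 0 := hx
    _ = 1 := hh0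

theorem gammakey (n : ℕ) (hn : 1 ≤ n) (α : ℝ) (h0 : 0 ≤ α) (h1 : α ≤ 2 * n + 3)
    (c : ℕ → ℝ) (hc0 : c 0 = 1)
    (hrec : ∀ k : ℕ, ((k : ℝ) + 1) * c (k + 1) = (α + k) * c k)
    (hcn : ∀ k, 0 ≤ c k) :
    ∀ k : ℕ, c k * Real.Gamma ((k:ℝ) + 3/2) * Real.Gamma ((n:ℝ) + α + 3/2)
      ≤ Real.Gamma (3/2) * Real.Gamma ((k:ℝ) + ((n:ℝ) + α + 3/2)) := by
  set A : ℝ := (n:ℝ) + α + 3/2 with hA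
  have hApos : 0 < A := by positivity
  intro k
  induction k with
  | zero => simp [hc0]
  | succ k ih =>
    have hΓ1 : Real.Gamma (((k:ℕ)+1 : ℕ) + 3/2 : ℝ) = ((k:ℝ) + 3/2) * Real.Gamma ((k:ℝ) + 3/2) := by
      rw [show ((((k:ℕ)+1 : ℕ) : ℝ) + 3/2) = ((k:ℝ) + 3/2) + 1 by push_cast; ring,
        Real.Gamma_add_one (by positivity)]
    have hΓ2 : Real.Gamma (((k:ℕ)+1 : ℕ) + A : ℝ) = ((k:ℝ) + A) * Real.Gamma ((k:ℝ) + A) := by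
      rw [show ((((k:ℕ)+1 : ℕ) : ℝ) + A) = ((k:ℝ) + A) + 1 by push_cast; ring,
        Real.Gamma_add_one (by positivity)]
    have hck : ((k:ℝ) + 1) * c (k+1) = (α + k) * c k := hrec k
    have hG32 : 0 < Real.Gamma (3/2 : ℝ) := Real.Gamma_pos_of_pos (by norm_num)
    have hGkA : 0 < Real.Gamma ((k:ℝ) + A) := Real.Gamma_pos_of_pos (by positivity)
    have hGk32 : 0 < Real.Gamma ((k:ℝ) + 3/2) := Real.Gamma_pos_of_pos (by positivity)
    have hpoly : (α + k) * ((k:ℝ) + 3/2) ≤ ((k:ℝ) + 1) * ((k:ℝ) + A) := by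
      have hk : (0:ℝ) ≤ (k:ℝ) := Nat.cast_nonneg k
      have hn' : (1:ℝ) ≤ (n:ℝ) := by exact_mod_cast hn
      nlinarith
    -- multiply ih by (α+k)*(k+3/2), etc.
    have hk1pos : (0:ℝ) < (k:ℝ) + 1 := by positivity
    rw [hΓ1, hΓ2]
    have step1 : ((k:ℝ)+1) * (c (k+1) * (((k:ℝ) + 3/2) * Real.Gamma ((k:ℝ) + 3/2)) * Real.Gamma A)
        = (α + k) * ((k:ℝ) + 3/2) * (c k * Real.Gamma ((k:ℝ) + 3/2) * Real.Gamma A) := by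
      linear_combination ((k:ℝ) + 3/2) * Real.Gamma ((k:ℝ) + 3/2) * Real.Gamma A * hck
    have step2 : (α + k) * ((k:ℝ) + 3/2) * (c k * Real.Gamma ((k:ℝ) + 3/2) * Real.Gamma A)
        ≤ (α + k) * ((k:ℝ) + 3/2) * (Real.Gamma (3/2) * Real.Gamma ((k:ℝ) + A)) := by
      apply mul_le_mul_of_nonneg_left ih
      have hk : (0:ℝ) ≤ (k:ℝ) := Nat.cast_nonneg k
      nlinarith
    have step3 : (α + k) * ((k:ℝ) + 3/2) * (Real.Gamma (3/2) * Real.Gamma ((k:ℝ) + A))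
        ≤ ((k:ℝ)+1) * ((k:ℝ) + A) * (Real.Gamma (3/2) * Real.Gamma ((k:ℝ) + A)) := by
      apply mul_le_mul_of_nonneg_right hpoly
      positivity
    have : ((k:ℝ)+1) * (c (k+1) * (((k:ℝ) + 3/2) * Real.Gamma ((k:ℝ) + 3/2)) * Real.Gamma A)
        ≤ ((k:ℝ)+1) * (((k:ℝ) + A) * (Real.Gamma (3/2) * Real.Gamma ((k:ℝ) + A))) := by
      rw [step1]
      calc _ ≤ _ := step2
        _ ≤ _ := step3
        _ = ((k:ℝ)+1) * (((k:ℝ) + A) * (Real.Gamma (3/2) * Real.Gamma ((k:ℝ) + A))) := by ring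
    have := le_of_mul_le_mul_left (by linarith [this] : ((k:ℝ)+1) * (c (k+1) * (((k:ℝ) + 3/2) * Real.Gamma ((k:ℝ) + 3/2)) * Real.Gamma A) ≤ ((k:ℝ)+1) * (((k:ℝ) + A) * (Real.Gamma (3/2) * Real.Gamma ((k:ℝ) + A)))) hk1pos
    calc c (k+1) * (((k:ℝ) + 3/2) * Real.Gamma ((k:ℝ) + 3/2)) * Real.Gamma A
        ≤ ((k:ℝ) + A) * (Real.Gamma (3/2) * Real.Gamma ((k:ℝ) + A)) := this
      _ = Real.Gamma (3/2) * (((k:ℝ) + A) * Real.Gamma ((k:ℝ) + A)) := by ring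

/-- For `0 ≤ α ≤ 2n+3` (`n ≥ 1` an integer) and all `r ∈ [0,1)`,
`(1−r²)^α ∑_{k=0}^∞ C(α+k−1,k)² [Γ(k+3/2)/Γ(k+n+α+3/2)] r^{2k}
  ≤ Γ(3/2)/Γ(n+α+3/2)`, with equality at `r = 0`.
Here `C(α+k−1,k) = Γ(α+k)/(Γ(α)k!)`, equal to `1` for `k = 0`. -/
theorem stmt16 (n : ℕ) (hn : 1 ≤ n) (α : ℝ) (h0 : 0 ≤ α) (h1 : α ≤ 2 * n + 3)
    (c : ℕ → ℝ)
    (hc : ∀ k : ℕ, c k =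
      if k = 0 then 1 else Real.Gamma (α + k) / (Real.Gamma α * k.factorial))
    (r : ℝ) (hr : r ∈ Set.Ico (0 : ℝ) 1) :
    ((1 - r ^ 2) ^ α *
        ∑' k : ℕ, (c k) ^ 2 * (Real.Gamma ((k : ℝ) + 3/2) /
          Real.Gamma ((k : ℝ) + n + α + 3/2)) * r ^ (2 * k))
      ≤ Real.Gamma (3/2) / Real.Gamma ((n : ℝ) + α + 3/2) ∧
    (r = 0 →
      ((1 - r ^ 2) ^ α *
          ∑' k : ℕ, (c k) ^ 2 * (Real.Gamma ((k : ℝ) + 3/2) /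
            Real.Gamma ((k : ℝ) + n + α + 3/2)) * r ^ (2 * k))
        = Real.Gamma (3/2) / Real.Gamma ((n : ℝ) + α + 3/2)) := by
  obtain ⟨hr0, hr1⟩ := hr
  have hc0 : c 0 = 1 := by rw [hc]; simp
  have hrec := crec α h0 c hc
  have hcn := cnonneg α h0 c hc0 hrec
  set A : ℝ := (n:ℝ) + α + 3/2 with hA
  have hApos : 0 < A := by positivity
  have hGA : 0 < Real.Gamma A := Real.Gamma_pos_of_pos hApos
  have hG32 : 0 < Real.Gamma (3/2 : ℝ) := Real.Gamma_pos_of_pos (by norm_num)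
  have hkey := gammakey n hn α h0 h1 c hc0 hrec hcn
  set t : ℕ → ℝ := fun k => (c k) ^ 2 * (Real.Gamma ((k : ℝ) + 3/2) /
      Real.Gamma ((k : ℝ) + n + α + 3/2)) * r ^ (2 * k) with ht
  have hGkA : ∀ k : ℕ, 0 < Real.Gamma ((k:ℝ) + A) := fun k =>
    Real.Gamma_pos_of_pos (by positivity)
  have hGk32 : ∀ k : ℕ, 0 < Real.Gamma ((k:ℝ) + 3/2) := fun k =>
    Real.Gamma_pos_of_pos (by positivity)
  have hAk : ∀ k : ℕ, ((k:ℝ) + n + α + 3/2) = (k:ℝ) + A := fun k => by rw [hA]; ring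
  -- per-term bound
  rw [← hA] at hkey
  -- per-term bound
  have hterm : ∀ k : ℕ, t k ≤ (Real.Gamma (3/2) / Real.Gamma A) * (c k * (r^2) ^ k) := by
    intro k
    have h2 : c k * (Real.Gamma ((k:ℝ) + 3/2) / Real.Gamma ((k:ℝ) + A))
        ≤ Real.Gamma (3/2) / Real.Gamma A := by
      rw [← mul_div_assoc, div_le_div_iff₀ (hGkA k) hGA]
      exact hkey k
    have hrp : (0:ℝ) ≤ (r^2)^k := by positivity
    have h3 : c k * (c k * (Real.Gamma ((k:ℝ) + 3/2) / Real.Gamma ((k:ℝ) + A))) * (r^2)^k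
        ≤ c k * (Real.Gamma (3/2) / Real.Gamma A) * (r^2)^k := by
      apply mul_le_mul_of_nonneg_right _ hrp
      exact mul_le_mul_of_nonneg_left h2 (hcn k)
    calc t k = c k * (c k * (Real.Gamma ((k:ℝ) + 3/2) / Real.Gamma ((k:ℝ) + A))) * (r^2)^k := by
          rw [ht]; simp only [hAk k]; rw [pow_mul]; ring
      _ ≤ c k * (Real.Gamma (3/2) / Real.Gamma A) * (r^2)^k := h3
      _ = (Real.Gamma (3/2) / Real.Gamma A) * (c k * (r^2)^k) := by ring
  
  have htnn : ∀ k, 0 ≤ t k := by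
    intro k
    rw [ht]
    simp only
    apply mul_nonneg (mul_nonneg (sq_nonneg _) _) (pow_nonneg hr0 _)
    rw [hAk k]
    exact div_nonneg (hGk32 k).le (hGkA k).le
  set x : ℝ := r ^ 2 with hx
  have hx0 : 0 ≤ x := by positivity
  have hx1 : x < 1 := by rw [hx]; nlinarith
  have h1x : (0:ℝ) < 1 - x := by linarith
  have hpow : (0:ℝ) < (1 - x) ^ α := Real.rpow_pos_of_pos h1x α
  have hpsum : ∀ N : ℕ, ∑ k ∈ Finset.range N, c k * x ^ k ≤ ((1 - x) ^ α)⁻¹ := by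
    intro N
    have hb := psum_bound α h0 c hc0 hrec hcn x hx0 hx1 N
    calc ∑ k ∈ Finset.range N, c k * x ^ k
        = ((1 - x) ^ α)⁻¹ * ((1 - x) ^ α * ∑ k ∈ Finset.range N, c k * x ^ k) := by
          field_simp
      _ ≤ ((1 - x) ^ α)⁻¹ * 1 := mul_le_mul_of_nonneg_left hb (by positivity)
      _ = ((1 - x) ^ α)⁻¹ := mul_one _
  have hbound : ∀ s : Finset ℕ, ∑ k ∈ s, t k
      ≤ (Real.Gamma (3/2) / Real.Gamma A) * ((1 - x) ^ α)⁻¹ := by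
    intro s
    obtain ⟨N, hsN⟩ := s.exists_nat_subset_range
    calc ∑ k ∈ s, t k ≤ ∑ k ∈ s, (Real.Gamma (3/2) / Real.Gamma A) * (c k * x ^ k) :=
          Finset.sum_le_sum fun k _ => hterm k
      _ = (Real.Gamma (3/2) / Real.Gamma A) * ∑ k ∈ s, c k * x ^ k := by
          rw [Finset.mul_sum]
      _ ≤ (Real.Gamma (3/2) / Real.Gamma A) * ∑ k ∈ Finset.range N, c k * x ^ k := by
          apply mul_le_mul_of_nonneg_left _ (by positivity)
          exact Finset.sum_le_sum_of_subset_of_nonneg hsN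
            (fun k _ _ => mul_nonneg (hcn k) (pow_nonneg hx0 k))
      _ ≤ (Real.Gamma (3/2) / Real.Gamma A) * ((1 - x) ^ α)⁻¹ :=
          mul_le_mul_of_nonneg_left (hpsum N) (by positivity)
  have hineq : (1 - x) ^ α * ∑' k, t k ≤ Real.Gamma (3/2) / Real.Gamma ((n:ℝ) + α + 3/2) := by
    rw [← hA]
    by_cases hsum : Summable t
    · have htle : ∑' k, t k ≤ (Real.Gamma (3/2) / Real.Gamma A) * ((1 - x) ^ α)⁻¹ :=
        Summable.tsum_le_of_sum_le hsum hbound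
      calc (1 - x) ^ α * ∑' k, t k
          ≤ (1 - x) ^ α * ((Real.Gamma (3/2) / Real.Gamma A) * ((1 - x) ^ α)⁻¹) :=
            mul_le_mul_of_nonneg_left htle hpow.le
        _ = Real.Gamma (3/2) / Real.Gamma A := by field_simp
    · rw [tsum_eq_zero_of_not_summable hsum, mul_zero]
      positivity
  refine ⟨hineq, ?_⟩
  intro hr'
  subst hr'
  have ht0 : ∑' k, t k = Real.Gamma (3/2) / Real.Gamma ((n:ℝ) + α + 3/2) := by
    rw [tsum_eq_single 0]
    · rw [ht]
      simp only [hc0]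
      norm_num
    · intro k hk
      rw [ht]
      simp only
      rw [zero_pow (by omega : 2 * k ≠ 0), mul_zero]
  rw [ht0]
  norm_num
  rw [hA]
end
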